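/- Suppose λa + λb = 2 with λa > 1 and λb > 0. Then for every c ≥ max(λb, λb/(λa − 1)), the point x*(c) with x1a = 2c(λa − 1)/λb, x1b = c, x2a = λa − 1, x2b = λb, x3a = 1 is an equilibrium point of the diverge network dynamics; in particular, the dynamics admit a continuum of distinct equilibrium points. -/

import Mathlib

/-- Non-FIFO scaling factor at cell 2 of the diverge network, taken equal to `1` when
the denominator vanishes. -/
noncomputable def m2 (x1a x1b x2a x2b : ℝ) : ℝ :=
  if x1a / 2 + x1b = 0 then 1 else min 1 ((2 - x2a - x2b) / (x1a / 2 + x1b))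

/-- Non-FIFO scaling factor at cell 3 of the diverge network, taken equal to `1` when
the denominator vanishes. -/
noncomputable def m3 (x1a x3a : ℝ) : ℝ :=
  if x1a / 2 = 0 then 1 else min 1 ((2 - x3a) / (x1a / 2))

/-- Flow of commodity `a` from cell 1 to cell 2. -/
noncomputable def f12a (x1a x1b x2a x2b : ℝ) : ℝ := x1a / 2 * m2 x1a x1b x2a x2b

/-- Flow of commodity `b` from cell 1 to cell 2. -/
noncomputable def f12b (x1a x1b x2a x2b : ℝ) : ℝ := x1b * m2 x1a x1b x2a x2b

/-- Flow of commodity `a` from cell 1 to cell 3. -/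
noncomputable def f13a (x1a x3a : ℝ) : ℝ := x1a / 2 * m3 x1a x3a

/-- A state of the diverge network is an equilibrium point when the right-hand side of
the dynamics vanishes. -/
noncomputable def IsEquilibrium (la lb x1a x1b x2a x2b x3a : ℝ) : Prop :=
  la - f12a x1a x1b x2a x2b - f13a x1a x3a = 0 ∧
  lb - f12b x1a x1b x2a x2b = 0 ∧
  f12a x1a x1b x2a x2b - x2a = 0 ∧
  f12b x1a x1b x2a x2b - x2b = 0 ∧
  f13a x1a x3a - x3a = 0

lemma diverge_equilibrium_aux (la lb : ℝ)
    (hsum : la + lb = 2) (hla : 1 < la) (hlb : 0 < lb)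
    (c : ℝ) (hc : max lb (lb / (la - 1)) ≤ c) :
    IsEquilibrium la lb (2 * c * (la - 1) / lb) c (la - 1) lb 1 := by
  have hla1 : (0:ℝ) < la - 1 := by linarith
  have hc1 : lb ≤ c := le_trans (le_max_left _ _) hc
  have hc2 : lb / (la - 1) ≤ c := le_trans (le_max_right _ _) hc
  have hc0 : 0 < c := lt_of_lt_of_le hlb hc1
  have hlb' : lb ≠ 0 := ne_of_gt hlb
  have hc0' : c ≠ 0 := ne_of_gt hc0
  -- key identity: la - 1 + lb = 1
  have hkey : la - 1 + lb = 1 := by linarith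
  set x1a : ℝ := 2 * c * (la - 1) / lb with hx1a
  have hD2 : x1a / 2 + c = c / lb := by
    rw [hx1a]; field_simp; linear_combination hkey
  have hD2pos : (0:ℝ) < c / lb := div_pos hc0 hlb
  have hm2 : m2 x1a c (la - 1) lb = lb / c := by
    rw [m2, hD2, if_neg (ne_of_gt hD2pos)]
    have h1 : (2 - (la - 1) - lb) = 1 := by linarith
    rw [h1, one_div, inv_div]
    exact min_eq_right (by rw [div_le_one hc0]; exact hc1)
  have hhalf : x1a / 2 = c * (la - 1) / lb := by rw [hx1a]; ring
  have hhalfpos : (0:ℝ) < x1a / 2 := by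
    rw [hhalf]; positivity
  have hlbc : lb ≤ c * (la - 1) := by
    have := (div_le_iff₀ hla1).mp hc2; linarith
  have hm3 : m3 x1a 1 = lb / (c * (la - 1)) := by
    rw [m3, if_neg (ne_of_gt hhalfpos), hhalf]
    have h1 : (2 - (1:ℝ)) = 1 := by norm_num
    rw [h1, one_div, inv_div]
    refine min_eq_right ?_
    rw [div_le_one (by positivity)]
    exact hlbc
  have hca : c * (la - 1) ≠ 0 := by positivity
  constructor
  · rw [f12a, f13a, hm2, hm3, hhalf]
    field_simp
    try ring
  refine ⟨?_, ?_, ?_, ?_⟩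
  · rw [f12b, hm2]; field_simp; ring
  · rw [f12a, hm2, hhalf]; field_simp; ring
  · rw [f12b, hm2]; field_simp; ring
  · rw [f13a, hm3, hhalf]; field_simp; ring

theorem diverge_continuum_of_equilibria (la lb : ℝ)
    (hsum : la + lb = 2) (hla : 1 < la) (hlb : 0 < lb) :
    (∀ c : ℝ, max lb (lb / (la - 1)) ≤ c →
      IsEquilibrium la lb (2 * c * (la - 1) / lb) c (la - 1) lb 1) ∧
    {p : ℝ × ℝ × ℝ × ℝ × ℝ |
      IsEquilibrium la lb p.1 p.2.1 p.2.2.1 p.2.2.2.1 p.2.2.2.2}.Infinite := by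
  refine ⟨fun c hc => diverge_equilibrium_aux la lb hsum hla hlb c hc, ?_⟩
  have h : Set.InjOn (fun c : ℝ => ((2 * c * (la - 1) / lb, c, la - 1, lb, 1) : ℝ × ℝ × ℝ × ℝ × ℝ))
      (Set.Ici (max lb (lb / (la - 1)))) := by
    intro x _ y _ hxy
    exact congrArg (fun p : ℝ × ℝ × ℝ × ℝ × ℝ => p.2.1) hxy
  have hinf : (Set.Ici (max lb (lb / (la - 1)))).Infinite := Set.Ici_infinite _
  have himg := hinf.image h
  refine himg.mono ?_
  rintro p ⟨c, hc, rfl⟩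
  exact diverge_equilibrium_aux la lb hsum hla hlb c hc
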